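/- Let dA, dB ≥ 1 and let ρ be a positive semidefinite complex matrix indexed by Fin dA × Fin dB with Tr[ρ] = 1 (a bipartite density matrix). Then for every t ≥ 1 and all permutations π, σ of Fin t, the complex number Tr[(W_π^A ⊗ W_σ^B) · R] has absolute value at most 1, where R is the reindexed t-fold Kronecker power ρ^{⊗t}, W_π^A is the permutation operator of local dimension dA and W_σ^B of local dimension dB. (Paper's Proposition 13.) -/

import Mathlib

open Matrix Kronecker
open scoped ComplexOrder

noncomputable section

/-- Permutation operator `W_π` of local index `I`: `W_π[b,a] = 1` iff `b = a ∘ π`. -/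
def permOp (I : Type*) [DecidableEq I] {t : ℕ} (π : Equiv.Perm (Fin t)) :
    Matrix (Fin t → I) (Fin t → I) ℂ :=
  Matrix.of fun b a => if b = a ∘ ⇑π then 1 else 0

/-- `t`-fold Kronecker power of a matrix. -/
def kpow {I : Type*} (M : Matrix I I ℂ) (t : ℕ) :
    Matrix (Fin t → I) (Fin t → I) ℂ :=
  Matrix.of fun a b => ∏ i, M (a i) (b i)

lemma kpow_mul {I : Type*} [Fintype I] [DecidableEq I] (M N : Matrix I I ℂ) (t : ℕ) :
    kpow (M * N) t = kpow M t * kpow N t := by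
  ext a b
  simp only [kpow, Matrix.mul_apply, Matrix.of_apply]
  rw [Fintype.prod_sum]
  simp [Finset.prod_mul_distrib]

lemma kpow_conjTranspose {I : Type*} [Fintype I] (M : Matrix I I ℂ) (t : ℕ) :
    kpow Mᴴ t = (kpow M t)ᴴ := by
  ext a b
  simp [kpow, Matrix.conjTranspose_apply, star_prod]

lemma kpow_posSemidef {I : Type*} [Fintype I] [DecidableEq I] {M : Matrix I I ℂ}
    (hM : M.PosSemidef) (t : ℕ) : (kpow M t).PosSemidef := by
  obtain ⟨B, rfl⟩ := (by open scoped MatrixOrder in exact CStarAlgebra.nonneg_iff_eq_star_mul_self.mp hM.nonneg :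
    ∃ B : Matrix I I ℂ, M = Bᴴ * B)
  rw [kpow_mul, kpow_conjTranspose]
  exact Matrix.posSemidef_conjTranspose_mul_self _

lemma kpow_trace {I : Type*} [Fintype I] [DecidableEq I] (M : Matrix I I ℂ) (t : ℕ) :
    (kpow M t).trace = M.trace ^ t := by
  simp only [Matrix.trace, Matrix.diag, kpow, Matrix.of_apply]
  rw [Fintype.sum_pow]

/-- Entry bound for PSD matrices: `|M x y| ≤ (Re M x x + Re M y y)/2`. -/
lemma psd_entry_bound {n : Type*} [Fintype n] [DecidableEq n] {M : Matrix n n ℂ}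
    (hM : M.PosSemidef) (x y : n) :
    ‖M x y‖ ≤ (Complex.re (M x x) + Complex.re (M y y)) / 2 := by
  obtain ⟨B, rfl⟩ := (by open scoped MatrixOrder in exact CStarAlgebra.nonneg_iff_eq_star_mul_self.mp hM.nonneg :
    ∃ B : Matrix n n ℂ, M = Bᴴ * B)
  set u : EuclideanSpace ℂ n := WithLp.toLp 2 (fun k => B k x) with hu
  set v : EuclideanSpace ℂ n := WithLp.toLp 2 (fun k => B k y) with hv
  have huv : (Bᴴ * B) x y = inner ℂ u v := by
    simp [Matrix.mul_apply, Matrix.conjTranspose_apply, PiLp.inner_apply, hu, hv,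
      RCLike.inner_apply, mul_comm]
  have hxx : Complex.re ((Bᴴ * B) x x) = ‖u‖ ^ 2 := by
    have := inner_self_eq_norm_sq (𝕜 := ℂ) u
    rw [huv] at *
    have h2 : (Bᴴ * B) x x = inner ℂ u u := by
      simp [Matrix.mul_apply, Matrix.conjTranspose_apply, PiLp.inner_apply, hu,
        RCLike.inner_apply, mul_comm, -inner_self_eq_norm_sq_to_K]
    rw [h2]; exact this
  have hyy : Complex.re ((Bᴴ * B) y y) = ‖v‖ ^ 2 := by
    have := inner_self_eq_norm_sq (𝕜 := ℂ) v
    have h2 : (Bᴴ * B) y y = inner ℂ v v := by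
      simp [Matrix.mul_apply, Matrix.conjTranspose_apply, PiLp.inner_apply, hv,
        RCLike.inner_apply, mul_comm, -inner_self_eq_norm_sq_to_K]
    rw [h2]; exact this
  have hcs : ‖(Bᴴ * B) x y‖ ≤ ‖u‖ * ‖v‖ := by
    rw [huv]
    simpa using norm_inner_le_norm (𝕜 := ℂ) u v
  rw [hxx, hyy]
  nlinarith [norm_nonneg u, norm_nonneg v, sq_nonneg (‖u‖ - ‖v‖)]

theorem stmt_13 (dA dB : ℕ) (hA : 1 ≤ dA) (hB : 1 ≤ dB)
    (ρ : Matrix (Fin dA × Fin dB) (Fin dA × Fin dB) ℂ)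
    (hρ : ρ.PosSemidef) (hTr : ρ.trace = 1)
    (t : ℕ) (ht : 1 ≤ t) (π σ : Equiv.Perm (Fin t)) :
    ‖((permOp (Fin dA) π ⊗ₖ permOp (Fin dB) σ) *
        Matrix.reindex (Equiv.arrowProdEquivProdArrow (Fin t) (fun _ => Fin dA) (fun _ => Fin dB))
          (Equiv.arrowProdEquivProdArrow (Fin t) (fun _ => Fin dA) (fun _ => Fin dB))
          (kpow ρ t)).trace‖ ≤ 1 := by
  set e := Equiv.arrowProdEquivProdArrow (Fin t) (fun _ => Fin dA) (fun _ => Fin dB)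
  set R : Matrix ((Fin t → Fin dA) × (Fin t → Fin dB))
      ((Fin t → Fin dA) × (Fin t → Fin dB)) ℂ := Matrix.reindex e e (kpow ρ t) with hR
  have hRsub : R = (kpow ρ t).submatrix e.symm e.symm := by
    rw [hR, Matrix.reindex_apply]
  have hRpsd : R.PosSemidef := by
    rw [hRsub]; exact (kpow_posSemidef hρ t).submatrix _
  have hRtr : R.trace = 1 := by
    have : R.trace = (kpow ρ t).trace := by
      rw [hRsub, Matrix.trace, Matrix.trace]
      simp only [Matrix.diag, Matrix.submatrix_apply]
      exact Equiv.sum_comp e.symm fun j => kpow ρ t j j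
    rw [this, kpow_trace, hTr, one_pow]
  -- the permutation on indices
  set Ψ : ((Fin t → Fin dA) × (Fin t → Fin dB)) ≃ ((Fin t → Fin dA) × (Fin t → Fin dB)) :=
    (Equiv.arrowCongr π.symm (Equiv.refl (Fin dA))).prodCongr
      (Equiv.arrowCongr σ.symm (Equiv.refl (Fin dB))) with hΨ
  have hΨapp : ∀ q, Ψ q = (q.1 ∘ ⇑π, q.2 ∘ ⇑σ) := by
    intro q; rfl
  have hΨs : ∀ p : (Fin t → Fin dA) × (Fin t → Fin dB),
      Ψ.symm p = (p.1 ∘ ⇑π⁻¹, p.2 ∘ ⇑σ⁻¹) := by intro p; rfl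
  have hiff : ∀ p q : (Fin t → Fin dA) × (Fin t → Fin dB),
      (p.1 = q.1 ∘ ⇑π ∧ p.2 = q.2 ∘ ⇑σ) ↔ q = Ψ.symm p := by
    intro p q
    rw [Equiv.eq_symm_apply, hΨapp]
    constructor
    · rintro ⟨h1, h2⟩; exact Prod.ext h1.symm h2.symm
    · rintro h; exact ⟨(congrArg Prod.fst h).symm, (congrArg Prod.snd h).symm⟩
  have key : ((permOp (Fin dA) π ⊗ₖ permOp (Fin dB) σ) * R).trace
      = ∑ p, R (Ψ.symm p) p := by
    rw [Matrix.trace]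
    refine Finset.sum_congr rfl fun p _ => ?_
    rw [Matrix.diag_apply, Matrix.mul_apply]
    have hq : ∀ q, (permOp (Fin dA) π ⊗ₖ permOp (Fin dB) σ) p q * R q p
        = if q = Ψ.symm p then R q p else 0 := by
      intro q
      simp only [Matrix.kroneckerMap_apply, permOp, Matrix.of_apply]
      by_cases h : q = Ψ.symm p
      · obtain ⟨h1, h2⟩ := (hiff p q).mpr h
        rw [if_pos h1, if_pos h2, if_pos h]; ring
      · rw [if_neg h]
        rcases not_and_or.mp ((hiff p q).not.mpr h : _) with h' | h' <;>
          rw [if_neg h'] <;> ring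
    rw [Finset.sum_congr rfl fun q _ => hq q, Finset.sum_ite_eq']
    simp
  rw [key]
  calc ‖∑ p, R (Ψ.symm p) p‖
      ≤ ∑ p, ‖R (Ψ.symm p) p‖ := by
        simpa using norm_sum_le Finset.univ (fun p => R (Ψ.symm p) p)
    _ ≤ ∑ p, (Complex.re (R (Ψ.symm p) (Ψ.symm p)) + Complex.re (R p p)) / 2 :=
        Finset.sum_le_sum fun p _ => psd_entry_bound hRpsd _ _
    _ = 1 := by
        rw [← Finset.sum_div]
        have h1 : ∑ p, Complex.re (R (Ψ.symm p) (Ψ.symm p)) = ∑ p, Complex.re (R p p) :=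
          Equiv.sum_comp Ψ.symm (fun p => Complex.re (R p p))
        have h2 : ∑ p, Complex.re (R p p) = 1 := by
          have : Complex.re R.trace = 1 := by rw [hRtr]; simp
          rw [← this, Matrix.trace]
          simp [Matrix.diag]
        rw [Finset.sum_add_distrib, h1, h2]
        norm_num
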